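/- Let R be a ring and M an Artinian R-module that is strongly virtually regular. Then M is semisimple. -/
import Mathlib


/-- A submodule is a direct summand if it has a complement. -/
def Submodule.IsDirectSummand {R M : Type*} [Ring R] [AddCommGroup M] [Module R M]
    (N : Submodule R M) : Prop :=
  ∃ N' : Submodule R M, IsCompl N N'

/-- A module is strongly virtually regular if every finitely generated submodule is
isomorphic to a direct summand. -/
def StronglyVirtuallyRegular (R M : Type*) [Ring R] [AddCommGroup M] [Module R M] : Prop :=
  ∀ A : Submodule R M, A.FG → ∃ N : Submodule R M, N.IsDirectSummand ∧
    Nonempty (A ≃ₗ[R] N)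

/-- Any submodule that is a semisimple module is contained in the sum of all simple
submodules (the socle). -/
lemma le_sSup_simples_of_isSemisimpleModule {R M : Type*} [Ring R] [AddCommGroup M]
    [Module R M] (W : Submodule R M) [IsSemisimpleModule R W] :
    W ≤ sSup {m : Submodule R M | IsSimpleModule R m} := by
  have h1 : (⊤ : Submodule R W) = sSup {m : Submodule R W | IsSimpleModule R m} :=
    (IsSemisimpleModule.sSup_simples_eq_top R W).symm
  have h2 : W = Submodule.map W.subtype ⊤ := (Submodule.map_subtype_top W).symm
  rw [h2, h1, (Submodule.gc_map_comap W.subtype).l_sSup]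
  refine iSup₂_le fun m hm => le_sSup ?_
  haveI : IsSimpleModule R m := hm
  exact IsSimpleModule.congr
    (Submodule.equivMapOfInjective W.subtype W.injective_subtype m).symm

/-- The sum of all simple submodules is a semisimple module. -/
lemma isSemisimpleModule_sSup_simples {R M : Type*} [Ring R] [AddCommGroup M] [Module R M] :
    IsSemisimpleModule R ↥(sSup {m : Submodule R M | IsSimpleModule R m}) := by
  rw [sSup_eq_iSup]
  exact isSemisimpleModule_biSup_of_isSemisimpleModule_submodule
    (fun m hm => by haveI : IsSimpleModule R m := hm; infer_instance)

/-- An Artinian strongly virtually regular module is semisimple. -/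
theorem semisimple_of_artinian_stronglyVirtuallyRegular {R M : Type*} [Ring R]
    [AddCommGroup M] [Module R M] [IsArtinian R M]
    (h : StronglyVirtuallyRegular R M) : IsSemisimpleModule R M := by
  set S : Submodule R M := sSup {m : Submodule R M | IsSimpleModule R m} with hSdef
  haveI hssS : IsSemisimpleModule R S := isSemisimpleModule_sSup_simples
  have hfin : Module.Finite R S := (IsSemisimpleModule.finite_tfae.out 2 0).mp (isArtinian_submodule' S)
  have hFG : S.FG := Module.Finite.iff_fg.mp hfin
  obtain ⟨N, ⟨N', hcompl⟩, ⟨e⟩⟩ := h S hFG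
  have hNss : IsSemisimpleModule R N := IsSemisimpleModule.congr e.symm
  have hNS : N ≤ S := le_sSup_simples_of_isSemisimpleModule N
  let f : S →ₗ[R] S := (Submodule.inclusion hNS).comp (e : S →ₗ[R] N)
  have hfinj : Function.Injective f :=
    (Submodule.inclusion_injective hNS).comp e.injective
  have hfsurj : Function.Surjective f :=
    IsArtinian.surjective_of_injective_endomorphism f hfinj
  have hN' : N' = ⊥ := by
    by_contra hne
    obtain ⟨U, hUatom, hUle⟩ :=
      ((isAtomic_of_orderBot_wellFounded_lt
        (wellFounded_lt (α := Submodule R M))).eq_bot_or_exists_atom_le N').resolve_left hne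
    have hUsimple : IsSimpleModule R U := isSimpleModule_iff_isAtom.mpr hUatom
    obtain ⟨u, huU, hu0⟩ := Submodule.exists_mem_ne_zero_of_ne_bot hUatom.1
    have huS : u ∈ S := le_sSup (show U ∈ {m : Submodule R M | IsSimpleModule R m} from hUsimple) huU
    obtain ⟨x, hx⟩ := hfsurj ⟨u, huS⟩
    have huN : u ∈ N := by
      have := congrArg Subtype.val hx
      simp only [f, LinearMap.comp_apply, Submodule.coe_inclusion] at this
      rw [← this]
      exact (e x).2
    have : u ∈ N ⊓ N' := ⟨huN, hUle huU⟩
    rw [hcompl.inf_eq_bot] at this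
    exact hu0 this
  have hNtop : N = ⊤ := codisjoint_bot.mp (hN' ▸ hcompl.codisjoint)
  rw [hNtop] at e
  exact IsSemisimpleModule.congr (Submodule.topEquiv.symm.trans e.symm)
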